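/- Let X be a partially ordered real vector space with generating cone X₊ and let T : X⁽²⁾ → X⁽²⁾ be a linear map on the second symmetric tensor power. If T maps every positive decomposable element x ⊗ x (x ∈ X₊) to a tensor of rank at most 1, then T maps every decomposable element u ⊗ u (u ∈ X arbitrary) to a tensor of rank at most 1. -/

import Mathlib

open TensorProduct

/-- A (pointed) cone in a real vector space. -/
def IsCone {X : Type*} [AddCommGroup X] [Module ℝ X] (K : Set X) : Prop :=
  0 ∈ K ∧ (∀ x ∈ K, ∀ y ∈ K, x + y ∈ K) ∧
    (∀ (c : ℝ), 0 ≤ c → ∀ x ∈ K, c • x ∈ K) ∧ K ∩ (-K) ⊆ {0}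

/-- The second symmetric product space `X⁽²⁾`: the symmetric tensors in `X ⊗ X`. -/
noncomputable def sym2Space (X : Type*) [AddCommGroup X] [Module ℝ X] :
    Submodule ℝ (X ⊗[ℝ] X) :=
  LinearMap.eqLocus (TensorProduct.comm ℝ X X).toLinearMap LinearMap.id

lemma tmul_self_mem_sym2Space {X : Type*} [AddCommGroup X] [Module ℝ X] (x : X) :
    x ⊗ₜ[ℝ] x ∈ sym2Space X := by
  simp [sym2Space, LinearMap.mem_eqLocus]

/-- The decomposable element `x ⊗ x` viewed in `X⁽²⁾`. -/
noncomputable def sq2 {X : Type*} [AddCommGroup X] [Module ℝ X] (x : X) : sym2Space X :=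
  ⟨x ⊗ₜ[ℝ] x, tmul_self_mem_sym2Space x⟩

section Aux

variable {X : Type*} [AddCommGroup X] [Module ℝ X]

lemma repr_comm_aux {ι : Type*} (b : Module.Basis ι ℝ X) (t : X ⊗[ℝ] X) (i j : ι) :
    (b.tensorProduct b).repr (TensorProduct.comm ℝ X X t) (i, j)
      = (b.tensorProduct b).repr t (j, i) := by
  induction t with
  | zero => simp
  | tmul x y => simp [Module.Basis.tensorProduct_repr_tmul_apply, mul_comm]
  | add x y hx hy => simp [map_add, hx, hy]

lemma rank_one_of_minors {ι : Type*} (b : Module.Basis ι ℝ X) (t : X ⊗[ℝ] X)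
    (hsym : ∀ i j, (b.tensorProduct b).repr t (i, j) = (b.tensorProduct b).repr t (j, i))
    (hmin : ∀ i j k l, (b.tensorProduct b).repr t (i, j) * (b.tensorProduct b).repr t (k, l)
      = (b.tensorProduct b).repr t (i, l) * (b.tensorProduct b).repr t (k, j)) :
    ∃ (z : X) (l : ℝ), t = l • (z ⊗ₜ[ℝ] z) := by
  classical
  set f := (b.tensorProduct b).repr t with hf
  by_cases h0 : t = 0
  · exact ⟨0, 0, by simp [h0]⟩
  have hfne : f ≠ 0 := by
    intro hz
    exact h0 ((b.tensorProduct b).repr.map_eq_zero_iff.mp (hf ▸ hz))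
  obtain ⟨p, hp⟩ := Finsupp.ne_iff.mp hfne
  simp only [Finsupp.coe_zero, Pi.zero_apply] at hp
  obtain ⟨i₀, j₀⟩ := p
  have hdd : f (i₀, i₀) ≠ 0 := by
    have hm := hmin i₀ j₀ j₀ i₀
    have h2 : f (i₀, j₀) * f (j₀, i₀) ≠ 0 := by
      rw [← hsym i₀ j₀]
      exact mul_ne_zero hp hp
    rw [hm] at h2
    exact left_ne_zero_of_mul h2
  have hinj : Set.InjOn (fun i : ι => (i, i₀)) ((fun i : ι => (i, i₀)) ⁻¹' ↑f.support) := by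
    intro a _ b _ hab
    exact (Prod.mk.injEq _ _ _ _).mp hab |>.1
  set g : ι →₀ ℝ := Finsupp.comapDomain (fun i : ι => (i, i₀)) f hinj with hg
  refine ⟨b.repr.symm g, (f (i₀, i₀))⁻¹, ?_⟩
  apply (b.tensorProduct b).repr.injective
  ext q
  obtain ⟨i, j⟩ := q
  rw [map_smul]
  have hz : ∀ k, b.repr (b.repr.symm g) k = f (k, i₀) := by
    intro k; rw [b.repr.apply_symm_apply]; rfl
  have hv : (b.tensorProduct b).repr ((b.repr.symm g) ⊗ₜ[ℝ] (b.repr.symm g)) (i, j)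
      = f (j, i₀) * f (i, i₀) := by
    rw [Module.Basis.tensorProduct_repr_tmul_apply, hz, hz, smul_eq_mul]
  rw [Finsupp.smul_apply, hv, smul_eq_mul]
  have key : f (i, i₀) * f (i₀, j) = f (i, j) * f (i₀, i₀) := hmin i i₀ i₀ j
  rw [hsym i₀ j] at key
  field_simp
  linarith [key]

lemma mixed_mem_sym2Space (a c : X) : a ⊗ₜ[ℝ] c + c ⊗ₜ[ℝ] a ∈ sym2Space X := by
  simp [sym2Space, LinearMap.mem_eqLocus, add_comm]

lemma sq2_expand (a c : X) (α : ℝ) :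
    sq2 (a + α • c) = sq2 a + α • (⟨_, mixed_mem_sym2Space a c⟩ : sym2Space X)
      + (α * α) • sq2 c := by
  apply Subtype.ext
  show (a + α • c) ⊗ₜ[ℝ] (a + α • c)
      = a ⊗ₜ[ℝ] a + α • (a ⊗ₜ[ℝ] c + c ⊗ₜ[ℝ] a) + (α * α) • c ⊗ₜ[ℝ] c
  simp only [tmul_add, add_tmul, tmul_smul, smul_tmul', smul_add, smul_smul]
  abel

end Aux

theorem stmt5 {X : Type*} [AddCommGroup X] [Module ℝ X]
    (Xp : Set X) (hK : IsCone Xp)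
    (hgen : ∀ z : X, ∃ a ∈ Xp, ∃ b ∈ Xp, z = a - b)
    (T : sym2Space X →ₗ[ℝ] sym2Space X)
    (h : ∀ x ∈ Xp, ∃ (z : X) (l : ℝ),
      ((T (sq2 x) : sym2Space X) : X ⊗[ℝ] X) = l • (z ⊗ₜ[ℝ] z)) :
    ∀ u : X, ∃ (z : X) (l : ℝ),
      ((T (sq2 u) : sym2Space X) : X ⊗[ℝ] X) = l • (z ⊗ₜ[ℝ] z) := by
  classical
  intro u
  obtain ⟨a, ha, c, hc, hu⟩ := hgen u
  set b := Module.Basis.ofVectorSpace ℝ X with hb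
  set bb := b.tensorProduct b with hbb
  set F : sym2Space X →ₗ[ℝ]
      ((Module.Basis.ofVectorSpaceIndex ℝ X) × (Module.Basis.ofVectorSpaceIndex ℝ X) →₀ ℝ) :=
    bb.repr.toLinearMap ∘ₗ ((sym2Space X).subtype ∘ₗ T) with hF
  have hFapp : ∀ s : sym2Space X, F s = bb.repr ((T s : sym2Space X) : X ⊗[ℝ] X) :=
    fun s => rfl
  set S : sym2Space X := ⟨_, mixed_mem_sym2Space a c⟩ with hS
  set A := F (sq2 a) with hA
  set B := F S with hB
  set Cc := F (sq2 c) with hCc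
  have hexp : ∀ α : ℝ, F (sq2 (a + α • c)) = A + α • B + (α * α) • Cc := by
    intro α
    rw [sq2_expand, map_add, map_add, map_smul, map_smul]
  have hminors : ∀ x ∈ Xp, ∀ i j k m,
      F (sq2 x) (i, j) * F (sq2 x) (k, m) = F (sq2 x) (i, m) * F (sq2 x) (k, j) := by
    intro x hx i j k m
    obtain ⟨z, l, hz⟩ := h x hx
    have hFx : F (sq2 x) = bb.repr (l • (z ⊗ₜ[ℝ] z)) := by rw [hFapp, hz]
    simp only [hFx, map_smul, Finsupp.smul_apply, smul_eq_mul, hbb,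
      Module.Basis.tensorProduct_repr_tmul_apply]
    ring
  have hcone : ∀ α : ℝ, 0 ≤ α → a + α • c ∈ Xp :=
    fun α hα => hK.2.1 a ha _ (hK.2.2.1 α hα c hc)
  set G := F (sq2 u) with hG
  have hGq : ∀ q, G q = A q - B q + Cc q := by
    intro q
    have h1 : a + (-1 : ℝ) • c = u := by rw [hu]; simp [sub_eq_add_neg]
    rw [hG, ← h1, hexp]
    simp only [Finsupp.add_apply, Finsupp.smul_apply, smul_eq_mul]
    ring
  have hGmin : ∀ i j k m, G (i, j) * G (k, m) = G (i, m) * G (k, j) := by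
    intro i j k m
    set Pq : (Module.Basis.ofVectorSpaceIndex ℝ X) × (Module.Basis.ofVectorSpaceIndex ℝ X) →
        Polynomial ℝ := fun q =>
      Polynomial.C (A q) + Polynomial.C (B q) * Polynomial.X
        + Polynomial.C (Cc q) * Polynomial.X ^ 2 with hPq
    have hPeval : ∀ q (α : ℝ), (Pq q).eval α = F (sq2 (a + α • c)) q := by
      intro q α
      rw [hexp]
      simp only [hPq, Polynomial.eval_add, Polynomial.eval_mul, Polynomial.eval_C,
        Polynomial.eval_X, Polynomial.eval_pow, Finsupp.add_apply, Finsupp.smul_apply,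
        smul_eq_mul]
      ring
    set P := Pq (i, j) * Pq (k, m) - Pq (i, m) * Pq (k, j) with hP
    have hProots : Set.Ici (0 : ℝ) ⊆ {x | P.IsRoot x} := by
      intro α hα
      have hm := hminors _ (hcone α (Set.mem_Ici.mp hα)) i j k m
      show P.eval α = 0
      rw [hP]
      simp only [Polynomial.eval_sub, Polynomial.eval_mul, hPeval]
      rw [hm]; ring
    have hP0 : P = 0 := Polynomial.eq_zero_of_infinite_isRoot _
      ((Set.Ici_infinite (0 : ℝ)).mono hProots)
    have hev := congrArg (Polynomial.eval (-1 : ℝ)) hP0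
    simp only [hP, hPq, Polynomial.eval_sub, Polynomial.eval_mul, Polynomial.eval_add,
      Polynomial.eval_C, Polynomial.eval_X, Polynomial.eval_pow, Polynomial.eval_zero] at hev
    rw [hGq (i, j), hGq (k, m), hGq (i, m), hGq (k, j)]
    linear_combination hev
  set t := ((T (sq2 u) : sym2Space X) : X ⊗[ℝ] X) with ht
  have htmem : TensorProduct.comm ℝ X X t = t := by
    have h2 := LinearMap.mem_eqLocus.mp (T (sq2 u)).2
    simpa using h2
  have hsym : ∀ i j, bb.repr t (i, j) = bb.repr t (j, i) := by
    intro i j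
    conv_lhs => rw [← htmem]
    exact repr_comm_aux b t i j
  exact rank_one_of_minors b t hsym (fun i j k m => hGmin i j k m)
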